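/- For every integer n ≥ 1 and every real number r with 0 ≤ r ≤ 1, the sum ∑_{i=1}^n i^r is at least n(n+1)^r/(r+1). -/

import Mathlib

theorem levin_steckin_low (n : ℕ) (hn : 1 ≤ n) (r : ℝ) (hr0 : 0 ≤ r) (hr1 : r ≤ 1) :
    ∑ i ∈ Finset.Icc 1 n, (i : ℝ) ^ r ≥ n * (n + 1 : ℝ) ^ r / (r + 1) := by
  have hr1' : (0:ℝ) < r + 1 := by linarith
  induction n, hn using Nat.le_induction with
  | base =>
    simp only [Finset.Icc_self, Finset.sum_singleton, Nat.cast_one]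
    rw [Real.one_rpow, ge_iff_le, div_le_one hr1']
    have := rpow_one_add_le_one_add_mul_self (s := 1) (by norm_num) hr0 hr1
    norm_num at this ⊢
    linarith
  | succ n hn ih =>
    rw [Finset.sum_Icc_succ_top (by omega)]
    have hn1 : (0:ℝ) < (n:ℝ) + 1 := by positivity
    have key : ((n:ℝ) + 2) ^ r ≤ ((n:ℝ) + 1) ^ r * (1 + r * (1 / ((n:ℝ) + 1))) := by
      have h1 : ((n:ℝ) + 2) = ((n:ℝ) + 1) * (1 + 1 / ((n:ℝ) + 1)) := by
        field_simp; ring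
      rw [h1, Real.mul_rpow (by positivity) (by positivity)]
      gcongr
      exact rpow_one_add_le_one_add_mul_self (by linarith [one_div_nonneg.mpr hn1.le]) hr0 hr1
    have h2 : (↑(n + 1) : ℝ) * ((↑(n + 1) : ℝ) + 1) ^ r / (r + 1)
        ≤ (n:ℝ) * ((n:ℝ) + 1) ^ r / (r + 1) + (↑(n + 1) : ℝ) ^ r := by
      push_cast
      rw [div_add' _ _ _ (ne_of_gt hr1'), div_le_div_iff₀ hr1' hr1']
      have : ((n:ℝ) + 1) * ((n:ℝ) + 1 + 1) ^ r ≤ ((n:ℝ) + 1) * (((n:ℝ) + 1) ^ r * (1 + r * (1 / ((n:ℝ) + 1)))) := by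
        have : (n:ℝ) + 1 + 1 = (n:ℝ) + 2 := by ring
        rw [this]; gcongr
      calc ((n:ℝ) + 1) * ((n:ℝ) + 1 + 1) ^ r * (r + 1)
          ≤ ((n:ℝ) + 1) * (((n:ℝ) + 1) ^ r * (1 + r * (1 / ((n:ℝ) + 1)))) * (r + 1) :=
            mul_le_mul_of_nonneg_right this (by linarith)
        _ = ((n:ℝ) * ((n:ℝ) + 1) ^ r + ((n:ℝ) + 1) ^ r * (r + 1)) * (r + 1) := by
            field_simp
            ring_nf
    exact le_trans h2 (by push_cast at ih ⊢; linarith)
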